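/- Let a ∈ (0, 1). Let (X1, X2) be a random vector with P(X1 ≤ x1, X2 ≤ x2) = exp(-V_X(x1, x2)) for all x1, x2 > 0, where V_X : (0,∞)² → (0,∞) is homogeneous of degree -1 (V_X(t·x1, t·x2) = t^{-1}·V_X(x1, x2) for t > 0). Let (Y1, Y2) be a random vector, independent of (X1, X2), of the form Yi = -1/log(1 - exp(-1/X'i)), where (X'1, X'2) has unit Fréchet margins and joint distribution P(X'1 ≤ x1, X'2 ≤ x2) = exp(-V_Y(x1, x2)) for x1, x2 > 0. Then, with ω(z) = -1/log(1 - exp(-1/z)), for all z1, z2 > 0: P( max(a·X1, (1-a)·Y1) ≤ z1, max(a·X2, (1-a)·Y2) ≤ z2 ) = exp(-a·V_X(z1, z2)) · { -1 + exp(-(1-a)/z1) + exp(-(1-a)/z2) + exp( -V_Y( ω(z1/(1-a)), ω(z2/(1-a)) ) ) }. -/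

import Mathlib

open MeasureTheory ProbabilityTheory
open Filter

/-- The inverted max-stable transformation `ω(z) = -1/log(1 - exp(-1/z))`. -/
noncomputable def imsTransform (z : ℝ) : ℝ := -1 / Real.log (1 - Real.exp (-1 / z))


lemma exp_neg_inv_lt_one {x : ℝ} (hx : 0 < x) : Real.exp (-1 / x) < 1 := by
  rw [Real.exp_lt_one_iff]
  have : 0 < 1 / x := by positivity
  rw [neg_div]; linarith

lemma one_sub_exp_pos {x : ℝ} (hx : 0 < x) : 0 < 1 - Real.exp (-1 / x) := by
  linarith [exp_neg_inv_lt_one hx]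

lemma log_one_sub_exp_neg {x : ℝ} (hx : 0 < x) : Real.log (1 - Real.exp (-1 / x)) < 0 :=
  Real.log_neg (one_sub_exp_pos hx) (by linarith [Real.exp_pos (-1 / x)])

lemma ims_pos {x : ℝ} (hx : 0 < x) : 0 < imsTransform x := by
  unfold imsTransform
  have h := log_one_sub_exp_neg hx
  rw [neg_div]
  simpa using div_neg_of_pos_of_neg one_pos h

lemma exp_neg_inv_ims {x : ℝ} (hx : 0 < x) :
    Real.exp (-1 / imsTransform x) = 1 - Real.exp (-1 / x) := by
  unfold imsTransform
  have h := log_one_sub_exp_neg hx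
  rw [div_div_eq_mul_div, mul_comm, mul_div_assoc, div_self (by norm_num : (-1:ℝ) ≠ 0), mul_one,
    Real.exp_log (one_sub_exp_pos hx)]

lemma ims_le_iff {w c : ℝ} (hw : 0 < w) (hc : 0 < c) :
    imsTransform w ≤ c ↔ 1 ≤ Real.exp (-1 / w) + Real.exp (-1 / c) := by
  unfold imsTransform
  have h := log_one_sub_exp_neg hw
  rw [div_le_iff_of_neg h]
  rw [show c * Real.log (1 - Real.exp (-1 / w)) ≤ -1 ↔
      Real.log (1 - Real.exp (-1 / w)) ≤ -1 / c from by
    rw [le_div_iff₀ hc, mul_comm]]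
  rw [Real.log_le_iff_le_exp (one_sub_exp_pos hw)]
  constructor <;> intro <;> linarith

lemma ims_le_iff' {w c : ℝ} (hw : 0 < w) (hc : 0 < c) :
    imsTransform w ≤ c ↔ imsTransform c ≤ w := by
  rw [ims_le_iff hw hc, ims_le_iff hc hw, add_comm]

lemma frechet_nonpos_null {Ω : Type*} [MeasurableSpace Ω] (P : Measure Ω)
    (W : Ω → ℝ)
    (hF : ∀ z : ℝ, 0 < z → P {ω | W ω ≤ z} = ENNReal.ofReal (Real.exp (-1 / z))) :
    P {ω | W ω ≤ 0} = 0 := by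
  have h : ∀ n : ℕ, P {ω | W ω ≤ 0} ≤ ENNReal.ofReal (Real.exp (-((n : ℝ) + 1))) := by
    intro n
    have hz : (0:ℝ) < 1 / ((n : ℝ) + 1) := by positivity
    calc P {ω | W ω ≤ 0} ≤ P {ω | W ω ≤ 1 / ((n : ℝ) + 1)} :=
          measure_mono (fun ω h => le_trans h hz.le)
      _ = ENNReal.ofReal (Real.exp (-1 / (1 / ((n : ℝ) + 1)))) := hF _ hz
      _ = _ := by rw [show -1 / (1 / ((n:ℝ) + 1)) = -((n:ℝ) + 1) by field_simp]
  have htend : Tendsto (fun n : ℕ => ENNReal.ofReal (Real.exp (-((n : ℝ) + 1)))) atTop (nhds 0) := by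
    rw [show (0 : ENNReal) = ENNReal.ofReal 0 by simp]
    refine (ENNReal.continuous_ofReal.tendsto 0).comp ?_
    refine Real.tendsto_exp_atBot.comp ?_
    refine tendsto_neg_atBot_iff.mpr ?_
    exact tendsto_atTop_add_const_right _ 1 tendsto_natCast_atTop_atTop
  exact le_antisymm (ge_of_tendsto htend (Eventually.of_forall h)) (zero_le)

lemma frechet_atom_null {Ω : Type*} [MeasurableSpace Ω] (P : Measure Ω)
    (W : Ω → ℝ) (hW : Measurable W)
    (hF : ∀ z : ℝ, 0 < z → P {ω | W ω ≤ z} = ENNReal.ofReal (Real.exp (-1 / z)))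
    {b : ℝ} (hb : 0 < b) : P {ω | W ω = b} = 0 := by
  obtain ⟨N, hN⟩ := exists_nat_gt (1 / b)
  have key : ∀ᶠ n : ℕ in atTop,
      P {ω | W ω = b} + ENNReal.ofReal (Real.exp (-1 / (b - 1 / ((n:ℝ) + 1))))
        ≤ ENNReal.ofReal (Real.exp (-1 / b)) := by
    refine eventually_atTop.2 ⟨N, fun n hn => ?_⟩
    have hn1 : (1:ℝ) / b < (n:ℝ) + 1 := lt_of_lt_of_le hN (by exact_mod_cast le_trans hn (Nat.le_succ n))
    have hδ : (0:ℝ) < 1 / ((n:ℝ) + 1) := by positivity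
    have hlt : 1 / ((n:ℝ) + 1) < b := by
      rw [div_lt_iff₀ (by positivity)]
      rw [div_lt_iff₀ hb] at hn1
      linarith
    have hbp : (0:ℝ) < b - 1 / ((n:ℝ) + 1) := by linarith
    have hdisj : Disjoint {ω | W ω = b} {ω | W ω ≤ b - 1 / ((n:ℝ) + 1)} := by
      rw [Set.disjoint_left]
      intro ω h1 h2
      simp only [Set.mem_setOf_eq] at h1 h2
      rw [h1] at h2; linarith
    have hmeas : MeasurableSet {ω | W ω ≤ b - 1 / ((n:ℝ) + 1)} := hW measurableSet_Iic
    calc P {ω | W ω = b} + ENNReal.ofReal (Real.exp (-1 / (b - 1 / ((n:ℝ) + 1))))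
        = P {ω | W ω = b} + P {ω | W ω ≤ b - 1 / ((n:ℝ) + 1)} := by rw [hF _ hbp]
      _ = P ({ω | W ω = b} ∪ {ω | W ω ≤ b - 1 / ((n:ℝ) + 1)}) :=
          (measure_union hdisj hmeas).symm
      _ ≤ P {ω | W ω ≤ b} := by
          refine measure_mono ?_
          rintro ω (h | h) <;> simp only [Set.mem_setOf_eq] at *
          · exact h.le
          · linarith
      _ = ENNReal.ofReal (Real.exp (-1 / b)) := hF _ hb
  have htreal : Tendsto (fun n : ℕ => Real.exp (-1 / (b - 1 / ((n:ℝ) + 1)))) atTop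
      (nhds (Real.exp (-1 / b))) := by
    have h1 : Tendsto (fun n : ℕ => b - 1 / ((n:ℝ) + 1)) atTop (nhds b) := by
      have := tendsto_one_div_add_atTop_nhds_zero_nat (𝕜 := ℝ)
      have h2 := Tendsto.sub (tendsto_const_nhds : Tendsto (fun _ : ℕ => b) atTop (nhds b)) this
      simpa using h2
    have hc : ContinuousAt (fun x : ℝ => Real.exp (-1 / x)) b :=
      Real.continuous_exp.continuousAt.comp (ContinuousAt.div continuousAt_const continuousAt_id hb.ne')
    exact hc.tendsto.comp h1
  have htend : Tendsto (fun n : ℕ => P {ω | W ω = b} + ENNReal.ofReal (Real.exp (-1 / (b - 1 / ((n:ℝ) + 1)))))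
      atTop (nhds (P {ω | W ω = b} + ENNReal.ofReal (Real.exp (-1 / b)))) :=
    tendsto_const_nhds.add ((ENNReal.continuous_ofReal.tendsto _).comp htreal)
  have hle := le_of_tendsto htend key
  have hfin : ENNReal.ofReal (Real.exp (-1 / b)) ≠ ⊤ := ENNReal.ofReal_ne_top
  have : P {ω | W ω = b} + ENNReal.ofReal (Real.exp (-1 / b))
      ≤ 0 + ENNReal.ofReal (Real.exp (-1 / b)) := by simpa using hle
  simpa using (ENNReal.add_le_add_iff_right hfin).mp this

/-- Equation (13): the explicit bivariate distribution function of a max-mixture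
process `Z_i = max(a·X_i, (1-a)·Y_i)`, where `(X₁, X₂)` is a max-stable pair with
exponent measure `V_X` homogeneous of degree `-1`, and `(Y₁, Y₂)` is an independent
inverted max-stable pair `Y_i = -1/log(1 - exp(-1/W_i))` obtained from a max-stable
pair `(W₁, W₂)` with unit Fréchet margins and exponent measure `V_Y`. -/
theorem max_mixture_ms_ims_bivariate_cdf
    {Ω : Type*} [MeasurableSpace Ω] (P : Measure Ω) [IsProbabilityMeasure P]
    (a : ℝ) (ha : a ∈ Set.Ioo (0 : ℝ) 1)
    (X1 X2 W1 W2 : Ω → ℝ)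
    (hX1 : Measurable X1) (hX2 : Measurable X2)
    (hW1 : Measurable W1) (hW2 : Measurable W2)
    (VX : ℝ → ℝ → ℝ)
    (hVXpos : ∀ x1 x2 : ℝ, 0 < x1 → 0 < x2 → 0 < VX x1 x2)
    (hVXhom : ∀ t x1 x2 : ℝ, 0 < t → 0 < x1 → 0 < x2 →
      VX (t * x1) (t * x2) = t⁻¹ * VX x1 x2)
    (hXjoint : ∀ x1 x2 : ℝ, 0 < x1 → 0 < x2 →
      P {ω | X1 ω ≤ x1 ∧ X2 ω ≤ x2} = ENNReal.ofReal (Real.exp (-VX x1 x2)))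
    (VY : ℝ → ℝ → ℝ)
    (hW1F : ∀ z : ℝ, 0 < z → P {ω | W1 ω ≤ z} = ENNReal.ofReal (Real.exp (-1 / z)))
    (hW2F : ∀ z : ℝ, 0 < z → P {ω | W2 ω ≤ z} = ENNReal.ofReal (Real.exp (-1 / z)))
    (hWjoint : ∀ x1 x2 : ℝ, 0 < x1 → 0 < x2 →
      P {ω | W1 ω ≤ x1 ∧ W2 ω ≤ x2} = ENNReal.ofReal (Real.exp (-VY x1 x2)))
    (hindep : IndepFun (fun ω => (X1 ω, X2 ω))
      (fun ω => (imsTransform (W1 ω), imsTransform (W2 ω))) P) :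
    ∀ z1 z2 : ℝ, 0 < z1 → 0 < z2 →
      P {ω | max (a * X1 ω) ((1 - a) * imsTransform (W1 ω)) ≤ z1 ∧
             max (a * X2 ω) ((1 - a) * imsTransform (W2 ω)) ≤ z2}
        = ENNReal.ofReal (Real.exp (-(a * VX z1 z2)))
          * ENNReal.ofReal (-1 + Real.exp (-(1 - a) / z1) + Real.exp (-(1 - a) / z2)
              + Real.exp (-VY (imsTransform (z1 / (1 - a)))
                  (imsTransform (z2 / (1 - a))))) := by
  intro z1 z2 hz1 hz2
  obtain ⟨ha0, ha1⟩ := ha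
  have ha' : (0:ℝ) < 1 - a := by linarith
  set c1 := z1 / (1 - a) with hc1def
  set c2 := z2 / (1 - a) with hc2def
  have hc1 : 0 < c1 := by positivity
  have hc2 : 0 < c2 := by positivity
  set b1 := imsTransform c1 with hb1def
  set b2 := imsTransform c2 with hb2def
  have hb1 : 0 < b1 := ims_pos hc1
  have hb2 : 0 < b2 := ims_pos hc2
  -- split the event into the product of two preimages
  have hset : {ω | max (a * X1 ω) ((1 - a) * imsTransform (W1 ω)) ≤ z1 ∧
             max (a * X2 ω) ((1 - a) * imsTransform (W2 ω)) ≤ z2}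
      = (fun ω => (X1 ω, X2 ω)) ⁻¹' (Set.Iic (z1 / a) ×ˢ Set.Iic (z2 / a)) ∩
        (fun ω => (imsTransform (W1 ω), imsTransform (W2 ω))) ⁻¹' (Set.Iic c1 ×ˢ Set.Iic c2) := by
    ext ω
    have h1 : ∀ u z : ℝ, 0 < z → (a * u ≤ z ↔ u ≤ z / a) := by
      intro u z _; rw [le_div_iff₀ ha0, mul_comm]
    have h2 : ∀ u z : ℝ, 0 < z → ((1 - a) * u ≤ z ↔ u ≤ z / (1 - a)) := by
      intro u z _; rw [le_div_iff₀ ha', mul_comm]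
    simp only [Set.mem_setOf_eq, Set.mem_inter_iff, Set.mem_preimage, Set.mem_prod,
      Set.mem_Iic, max_le_iff, h1 _ _ hz1, h1 _ _ hz2, h2 _ _ hz1, h2 _ _ hz2,
      hc1def, hc2def]
    tauto
  rw [hset, hindep.measure_inter_preimage_eq_mul _ _
    (measurableSet_Iic.prod measurableSet_Iic) (measurableSet_Iic.prod measurableSet_Iic)]
  -- X part
  have hXpart : P ((fun ω => (X1 ω, X2 ω)) ⁻¹' (Set.Iic (z1 / a) ×ˢ Set.Iic (z2 / a)))
      = ENNReal.ofReal (Real.exp (-(a * VX z1 z2))) := by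
    have hs : (fun ω => (X1 ω, X2 ω)) ⁻¹' (Set.Iic (z1 / a) ×ˢ Set.Iic (z2 / a))
        = {ω | X1 ω ≤ z1 / a ∧ X2 ω ≤ z2 / a} := by
      ext ω; simp [Set.mem_prod]
    rw [hs, hXjoint _ _ (by positivity) (by positivity)]
    congr 2
    have h1 : z1 / a = a⁻¹ * z1 := by rw [inv_mul_eq_div]
    have h2 : z2 / a = a⁻¹ * z2 := by rw [inv_mul_eq_div]
    rw [h1, h2, hVXhom a⁻¹ z1 z2 (by positivity) hz1 hz2, inv_inv]
  rw [hXpart]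
  congr 1
  -- Y part
  have hYset : (fun ω => (imsTransform (W1 ω), imsTransform (W2 ω))) ⁻¹' (Set.Iic c1 ×ˢ Set.Iic c2)
      = {ω | imsTransform (W1 ω) ≤ c1 ∧ imsTransform (W2 ω) ≤ c2} := by
    ext ω; simp [Set.mem_prod]
  rw [hYset]
  -- null set
  have hN1 := frechet_nonpos_null P W1 hW1F
  have hN2 := frechet_nonpos_null P W2 hW2F
  have hA1 := frechet_atom_null P W1 hW1 hW1F hb1
  have hA2 := frechet_atom_null P W2 hW2 hW2F hb2
  set E' : Set Ω := {ω | b1 < W1 ω ∧ b2 < W2 ω} with hE'def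
  have hae : P {ω | imsTransform (W1 ω) ≤ c1 ∧ imsTransform (W2 ω) ≤ c2} = P E' := by
    refine measure_congr ?_
    have hNnull : P ({ω | W1 ω ≤ 0} ∪ {ω | W2 ω ≤ 0} ∪ {ω | W1 ω = b1} ∪ {ω | W2 ω = b2}) = 0 := by
      refine measure_union_null (measure_union_null (measure_union_null hN1 hN2) hA1) hA2
    have hNae : ∀ᵐ ω ∂P, ω ∉ ({ω | W1 ω ≤ 0} ∪ {ω | W2 ω ≤ 0} ∪ {ω | W1 ω = b1} ∪ {ω | W2 ω = b2} : Set Ω) :=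
      measure_eq_zero_iff_ae_notMem.mp hNnull
    filter_upwards [hNae] with ω hω
    simp only [Set.mem_union, Set.mem_setOf_eq, not_or] at hω
    obtain ⟨⟨⟨h1, h2⟩, h3⟩, h4⟩ := hω
    push_neg at h1 h2
    have hiff1 : imsTransform (W1 ω) ≤ c1 ↔ b1 < W1 ω := by
      rw [ims_le_iff' h1 hc1]
      exact ⟨fun h => lt_of_le_of_ne h (Ne.symm h3), fun h => h.le⟩
    have hiff2 : imsTransform (W2 ω) ≤ c2 ↔ b2 < W2 ω := by
      rw [ims_le_iff' h2 hc2]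
      exact ⟨fun h => lt_of_le_of_ne h (Ne.symm h4), fun h => h.le⟩
    show (imsTransform (W1 ω) ≤ c1 ∧ imsTransform (W2 ω) ≤ c2) = (b1 < W1 ω ∧ b2 < W2 ω)
    rw [eq_iff_iff]
    exact and_congr hiff1 hiff2
  rw [hae]
  -- inclusion-exclusion
  set A : Set Ω := {ω | W1 ω ≤ b1} with hAdef
  set B : Set Ω := {ω | W2 ω ≤ b2} with hBdef
  have hAmeas : MeasurableSet A := hW1 measurableSet_Iic
  have hBmeas : MeasurableSet B := hW2 measurableSet_Iic
  have hcompl : E' = (A ∪ B)ᶜ := by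
    ext ω
    simp only [hE'def, hAdef, hBdef, Set.mem_setOf_eq, Set.mem_compl_iff, Set.mem_union, not_or,
      not_le]
  have hPA : P A = ENNReal.ofReal (Real.exp (-1 / b1)) := hW1F b1 hb1
  have hPB : P B = ENNReal.ofReal (Real.exp (-1 / b2)) := hW2F b2 hb2
  have hPAB : P (A ∩ B) = ENNReal.ofReal (Real.exp (-VY b1 b2)) := by
    have : A ∩ B = {ω | W1 ω ≤ b1 ∧ W2 ω ≤ b2} := by ext ω; simp [hAdef, hBdef, Set.mem_setOf_eq]
    rw [this]; exact hWjoint b1 b2 hb1 hb2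
  have hflip : P (A ∪ B) + P E' = 1 := by
    rw [hcompl, measure_add_measure_compl (hAmeas.union hBmeas), measure_univ]
  have hincl : P (A ∪ B) + P (A ∩ B) = P A + P B := measure_union_add_inter A hBmeas
  have hkey : P E' + P A + P B = 1 + P (A ∩ B) := by
    calc P E' + P A + P B = P E' + (P (A ∪ B) + P (A ∩ B)) := by rw [hincl]; ring
      _ = (P (A ∪ B) + P E') + P (A ∩ B) := by ring
      _ = 1 + P (A ∩ B) := by rw [hflip]
  -- convert to reals
  have hfin : P E' ≠ ⊤ := measure_ne_top P E'
  have hkeyr := congrArg ENNReal.toReal hkey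
  rw [hPA, hPB, hPAB] at hkeyr
  rw [ENNReal.toReal_add (ENNReal.add_ne_top.mpr ⟨hfin, ENNReal.ofReal_ne_top⟩) ENNReal.ofReal_ne_top,
    ENNReal.toReal_add hfin ENNReal.ofReal_ne_top,
    ENNReal.toReal_add (by norm_num) ENNReal.ofReal_ne_top] at hkeyr
  rw [ENNReal.toReal_ofReal (Real.exp_nonneg _), ENNReal.toReal_ofReal (Real.exp_nonneg _),
    ENNReal.toReal_ofReal (Real.exp_nonneg _), ENNReal.toReal_one] at hkeyr
  have hPE' : (P E').toReal = 1 + Real.exp (-VY b1 b2) - Real.exp (-1 / b1) - Real.exp (-1 / b2) := by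
    linarith
  rw [← ENNReal.ofReal_toReal hfin, hPE']
  congr 1
  have he1 : Real.exp (-1 / b1) = 1 - Real.exp (-(1 - a) / z1) := by
    rw [hb1def, exp_neg_inv_ims hc1]
    congr 2
    rw [hc1def, neg_div, neg_div, one_div_div]
  have he2 : Real.exp (-1 / b2) = 1 - Real.exp (-(1 - a) / z2) := by
    rw [hb2def, exp_neg_inv_ims hc2]
    congr 2
    rw [hc2def, neg_div, neg_div, one_div_div]
  rw [he1, he2]
  ring
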